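/- arXiv:1507.04717 — 4 statements merged into one kernel-verified Lean document; each statement's English description precedes it below -/
import Mathlib

section
/- Let H, K be separable Hilbert spaces, Z : H → K a bounded linear operator, and P the orthogonal projection onto the closure of the range of Z*. Then for any separable Hilbert space F, bounded operator X : F → H, and λ > 0, ‖(I − P) X‖ ≤ √λ · ‖(Z*Z + λ I)^{-1/2} X‖. -/
open ContinuousLinearMap
open scoped InnerProductSpace

/-- If `P` is the orthogonal projection onto the closure of the range of `Z*` and `T` is the
inverse square root of `Z*Z + λI`, then `‖(I - P) ∘ X‖ ≤ √λ · ‖T ∘ X‖`. -/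
theorem norm_one_sub_proj_comp_le
    {H K F : Type*}
    [NormedAddCommGroup H] [InnerProductSpace ℂ H] [CompleteSpace H]
    [NormedAddCommGroup K] [InnerProductSpace ℂ K] [CompleteSpace K]
    [NormedAddCommGroup F] [InnerProductSpace ℂ F] [CompleteSpace F]
    (Z : H →L[ℂ] K) (P : H →L[ℂ] H)
    -- `P` is the orthogonal projection onto the closure of `ran Z*`
    (hPidem : IsIdempotentElem P) (hPsa : IsSelfAdjoint P)
    (hPran : LinearMap.range (P : H →ₗ[ℂ] H) = (LinearMap.range ((adjoint Z : K →L[ℂ] H) : K →ₗ[ℂ] H)).topologicalClosure)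
    (lam : ℝ) (hlam : 0 < lam)
    -- `T` is the inverse square root of `Z*Z + λI`: positive, and `T²` inverts `Z*Z + λI`
    (T : H →L[ℂ] H) (hT : T.IsPositive)
    (hTl : (T * T) * (adjoint Z ∘L Z + (lam : ℂ) • 1) = 1)
    (hTr : (adjoint Z ∘L Z + (lam : ℂ) • 1) * (T * T) = 1) :
    ∀ X : F →L[ℂ] H, ‖(1 - P) ∘L X‖ ≤ Real.sqrt lam * ‖T ∘L X‖ := by
  intro X
  set Q : H →L[ℂ] H := 1 - P with hQdef
  have hTsa : adjoint T = T := hT.isSelfAdjoint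
  have hPadj : adjoint P = P := hPsa
  -- Q applied twice
  have hQidem : ∀ u : H, Q (Q u) = Q u := by
    intro u
    have h := DFunLike.congr_fun hPidem u
    simp only [ContinuousLinearMap.mul_apply] at h
    simp [hQdef, sub_apply, one_apply, map_sub, h]
  -- Z ∘ Q = 0
  have hZQ : ∀ u : H, Z (Q u) = 0 := by
    intro u
    have hPQ : P (Q u) = 0 := by
      have h := DFunLike.congr_fun hPidem u
      simp only [ContinuousLinearMap.mul_apply] at h
      simp [hQdef, sub_apply, one_apply, map_sub, h]
    rw [← inner_self_eq_zero (𝕜 := ℂ)]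
    have hmem : adjoint Z (Z (Q u)) ∈ LinearMap.range (P : H →ₗ[ℂ] H) := by
      rw [hPran]
      exact Submodule.le_topologicalClosure _ (LinearMap.mem_range_self _ _)
    obtain ⟨y, hy⟩ := hmem
    calc ⟪Z (Q u), Z (Q u)⟫_ℂ
        = ⟪Q u, adjoint Z (Z (Q u))⟫_ℂ := (adjoint_inner_right _ _ _).symm
      _ = ⟪Q u, P y⟫_ℂ := by rw [← hy]; rfl
      _ = ⟪adjoint P (Q u), y⟫_ℂ := (adjoint_inner_left _ _ _).symm
      _ = ⟪P (Q u), y⟫_ℂ := by rw [hPadj]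
      _ = 0 := by rw [hPQ]; simp
  -- pointwise bound
  have hTinner : ∀ x y : H, ⟪T x, y⟫_ℂ = ⟪x, T y⟫_ℂ := by
    intro x y
    conv_lhs => rw [← hTsa]
    exact adjoint_inner_left T y x
  have hQadj : adjoint (1 - P : H →L[ℂ] H) = 1 - P := by
    rw [map_sub, hPadj]
    congr 1
    exact ContinuousLinearMap.adjoint_id
  have key : ∀ u : H, ‖Q u‖ ≤ Real.sqrt lam * ‖T u‖ := by
    intro u
    have hne : (lam : ℂ) ≠ 0 := Complex.ofReal_ne_zero.mpr hlam.ne'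
    have h : (lam : ℂ) • T (T (Q u)) = Q u := by
      have h := DFunLike.congr_fun hTl (Q u)
      simp only [ContinuousLinearMap.mul_apply, one_apply, add_apply, smul_apply, comp_apply, hZQ u,
        map_zero, zero_add, map_smul] at h
      exact h
    have hTT : T (T (Q u)) = ((lam : ℂ))⁻¹ • Q u :=
      ((inv_smul_eq_iff₀ hne).mpr h.symm).symm
    -- ⟪Qu, Qu⟫ = λ ⟪T Qu, T u⟫
    have hinner1 : ⟪Q u, Q u⟫_ℂ = (lam : ℂ) * ⟪T (Q u), T u⟫_ℂ := by
      calc ⟪Q u, Q u⟫_ℂ = ⟪Q (Q u), u⟫_ℂ := by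
            rw [← adjoint_inner_left Q u (Q u), hQdef, hQadj]
        _ = ⟪Q u, u⟫_ℂ := by rw [hQidem]
        _ = ⟪(lam : ℂ) • T (T (Q u)), u⟫_ℂ := by rw [h]
        _ = (lam : ℂ) * ⟪T (T (Q u)), u⟫_ℂ := by
            rw [inner_smul_left, Complex.conj_ofReal]
        _ = (lam : ℂ) * ⟪T (Q u), T u⟫_ℂ := by rw [hTinner]
    -- ⟪T Qu, T Qu⟫ = λ⁻¹ ⟪Qu, Qu⟫
    have hinner2 : ⟪T (Q u), T (Q u)⟫_ℂ = ((lam : ℂ))⁻¹ * ⟪Q u, Q u⟫_ℂ := by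
      calc ⟪T (Q u), T (Q u)⟫_ℂ = ⟪T (T (Q u)), Q u⟫_ℂ := by rw [← hTinner]
        _ = ⟪((lam : ℂ))⁻¹ • Q u, Q u⟫_ℂ := by rw [hTT]
        _ = ((lam : ℂ))⁻¹ * ⟪Q u, Q u⟫_ℂ := by
            rw [inner_smul_left, ← Complex.ofReal_inv, Complex.conj_ofReal,
              Complex.ofReal_inv]
    have ha2 : ‖Q u‖ ^ 2 ≤ lam * (‖T (Q u)‖ * ‖T u‖) := by
      have h0 := inner_self_eq_norm_sq (𝕜 := ℂ) (Q u)
      rw [hinner1] at h0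
      simp only [RCLike.re_to_complex] at h0
      rw [Complex.re_ofReal_mul] at h0
      have h3 : Complex.re ⟪T (Q u), T u⟫_ℂ ≤ ‖T (Q u)‖ * ‖T u‖ := by
        refine le_trans ?_ (norm_inner_le_norm (𝕜 := ℂ) (T (Q u)) (T u))
        exact Complex.re_le_norm _
      rw [← h0]
      exact mul_le_mul_of_nonneg_left h3 hlam.le
    have hb2 : lam * ‖T (Q u)‖ ^ 2 = ‖Q u‖ ^ 2 := by
      have h0a := inner_self_eq_norm_sq (𝕜 := ℂ) (T (Q u))
      have h0b := inner_self_eq_norm_sq (𝕜 := ℂ) (Q u)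
      rw [hinner2] at h0a
      simp only [RCLike.re_to_complex] at h0a h0b
      rw [← Complex.ofReal_inv, Complex.re_ofReal_mul, h0b] at h0a
      field_simp at h0a ⊢
      linarith
    have hs2 : Real.sqrt lam ^ 2 = lam := Real.sq_sqrt hlam.le
    have hs0 : 0 < Real.sqrt lam := Real.sqrt_pos.mpr hlam
    have ha0 : 0 ≤ ‖Q u‖ := norm_nonneg _
    have hb0 : 0 ≤ ‖T (Q u)‖ := norm_nonneg _
    have hc0 : 0 ≤ ‖T u‖ := norm_nonneg _
    by_contra hcon
    push_neg at hcon
    have h1 : lam * ‖T u‖ ^ 2 < ‖Q u‖ ^ 2 := by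
      have hsc : 0 ≤ Real.sqrt lam * ‖T u‖ := mul_nonneg hs0.le hc0
      have h := mul_self_lt_mul_self hsc hcon
      have he : lam * ‖T u‖ ^ 2 = (Real.sqrt lam * ‖T u‖) * (Real.sqrt lam * ‖T u‖) := by
        rw [show (Real.sqrt lam * ‖T u‖) * (Real.sqrt lam * ‖T u‖)
            = Real.sqrt lam ^ 2 * ‖T u‖ ^ 2 from by ring, hs2]
      have he2 : ‖Q u‖ * ‖Q u‖ = ‖Q u‖ ^ 2 := by ring
      rw [he2] at h
      linarith [h, he.le, he.ge]
    have hcb : ‖T u‖ < ‖T (Q u)‖ := by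
      have hsq : ‖T u‖ ^ 2 < ‖T (Q u)‖ ^ 2 := by
        have := (mul_lt_mul_iff_right₀ hlam).mp (by linarith : lam * ‖T u‖ ^ 2 < lam * ‖T (Q u)‖ ^ 2)
        exact this
      exact lt_of_pow_lt_pow_left₀ 2 hb0 hsq
    have hbpos : 0 < ‖T (Q u)‖ := lt_of_le_of_lt hc0 hcb
    have h2 := mul_lt_mul_of_pos_left hcb (mul_pos hlam hbpos)
    have h3 : lam * ‖T (Q u)‖ * ‖T (Q u)‖ = ‖Q u‖ ^ 2 := by
      rw [← hb2]; ring
    have h4 : lam * ‖T (Q u)‖ * ‖T u‖ = lam * (‖T (Q u)‖ * ‖T u‖) := by ring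
    linarith [ha2, h2, h3, h4.le, h4.ge]
  refine opNorm_le_bound _ (by positivity) fun f => ?_
  calc ‖((1 - P) ∘L X) f‖ = ‖Q (X f)‖ := rfl
    _ ≤ Real.sqrt lam * ‖T (X f)‖ := key _
    _ ≤ Real.sqrt lam * (‖T ∘L X‖ * ‖f‖) := by
        have := (T ∘L X).le_opNorm f
        have hs : (0:ℝ) ≤ Real.sqrt lam := Real.sqrt_nonneg _
        calc Real.sqrt lam * ‖T (X f)‖ = Real.sqrt lam * ‖(T ∘L X) f‖ := rfl
          _ ≤ Real.sqrt lam * (‖T ∘L X‖ * ‖f‖) := by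
              exact mul_le_mul_of_nonneg_left this hs
    _ = Real.sqrt lam * ‖T ∘L X‖ * ‖f‖ := by ring
end

section
/- Let Z : H → K be a bounded linear operator between Hilbert spaces, with P the orthogonal projection onto the closure of the range of Z*, and λ > 0. Then P − Z*(ZZ* + λI)^{-1}Z is a positive operator. -/
open ContinuousLinearMap

/-- If `P` is the orthogonal projection onto the closure of the range of `Z*`, then
`P − Z*(ZZ* + λI)⁻¹Z` is a positive operator. -/
theorem proj_sub_adjoint_inv_isPositive
    {H K : Type*}
    [NormedAddCommGroup H] [InnerProductSpace ℂ H] [CompleteSpace H]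
    [NormedAddCommGroup K] [InnerProductSpace ℂ K] [CompleteSpace K]
    (Z : H →L[ℂ] K) (P : H →L[ℂ] H)
    (hPidem : IsIdempotentElem P) (hPsa : IsSelfAdjoint P)
    (hPran : LinearMap.range (P : H →ₗ[ℂ] H) = (LinearMap.range ((adjoint Z : K →L[ℂ] H) : K →ₗ[ℂ] H)).topologicalClosure)
    (lam : ℝ) (hlam : 0 < lam)
    -- `B = (ZZ* + λI)⁻¹`
    (B : K →L[ℂ] K)
    (hBl : B * (Z ∘L adjoint Z + (lam : ℂ) • 1) = 1)
    (hBr : (Z ∘L adjoint Z + (lam : ℂ) • 1) * B = 1) :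
    (P - adjoint Z ∘L B ∘L Z).IsPositive := by
  have hPadj : adjoint P = P := hPsa.adjoint_eq
  set T : K →L[ℂ] K := Z ∘L adjoint Z + (lam : ℂ) • 1 with hT
  have hTsa : adjoint T = T := by
    rw [hT, map_add, adjoint_comp, adjoint_adjoint]
    congr 1
    rw [← star_eq_adjoint, star_smul, star_one]
    norm_num
  -- B is self-adjoint
  have hBsa : adjoint B = B := by
    have h1 : T * adjoint B = 1 := by
      have := congrArg adjoint hBl
      rw [← star_eq_adjoint, star_mul, star_eq_adjoint, star_eq_adjoint, hTsa, show adjoint (1 : K →L[ℂ] K) = 1 from by rw [← star_eq_adjoint, star_one]] at this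
      exact this
    calc adjoint B = 1 * adjoint B := (one_mul _).symm
      _ = (B * T) * adjoint B := by rw [hBl]
      _ = B * (T * adjoint B) := mul_assoc _ _ _
      _ = B := by rw [h1, mul_one]
  rw [isPositive_def']
  constructor
  · rw [isSelfAdjoint_iff']
    ext x
    simp [map_sub, adjoint_comp, hPadj, hBsa, adjoint_adjoint]
  intro f
  -- Z f = Z (P f)
  have hZf : Z f = Z (P f) := by
    have hx : Z (f - P f) = 0 := by
      have h0 : (inner ℂ (Z (f - P f)) (Z (f - P f)) : ℂ) = 0 := by
        have hmem : adjoint Z (Z (f - P f)) ∈ LinearMap.range (P : H →ₗ[ℂ] H) := by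
          rw [hPran]
          exact Submodule.le_topologicalClosure _ ⟨Z (f - P f), rfl⟩
        obtain ⟨w, hw⟩ := hmem
        have hPx : P (f - P f) = 0 := by
          have := congrArg (fun A : H →L[ℂ] H => A f) hPidem
          simp only [ContinuousLinearMap.mul_apply] at this
          simp [map_sub, this]
        calc (inner ℂ (Z (f - P f)) (Z (f - P f)) : ℂ)
            = inner ℂ (f - P f) (adjoint Z (Z (f - P f))) := (adjoint_inner_right Z _ _).symm
          _ = inner ℂ (f - P f) (P w) := by rw [show P w = adjoint Z (Z (f - P f)) from hw]
          _ = inner ℂ (adjoint P (f - P f)) w := (adjoint_inner_left P _ _).symm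
          _ = 0 := by rw [hPadj, hPx, inner_zero_left]
      simpa using inner_self_eq_zero.mp h0
    have := map_sub Z f (P f)
    rw [hx] at this
    exact sub_eq_zero.mp this.symm
  set g : H := P f with hg
  set u : K := B (Z g) with hu
  set v : H := adjoint Z u with hv
  have hTu : Z v + (lam : ℂ) • u = Z g := by
    have := congrArg (fun A : K →L[ℂ] K => A (Z g)) hBr
    simpa [ContinuousLinearMap.mul_apply, ContinuousLinearMap.add_apply,
      ContinuousLinearMap.comp_apply, ContinuousLinearMap.smul_apply,
      ContinuousLinearMap.one_apply, hu, hv, hT] using this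
  have hvg : (inner ℂ v g : ℂ) = ((‖v‖ ^ 2 + lam * ‖u‖ ^ 2 : ℝ) : ℂ) := by
    calc (inner ℂ v g : ℂ) = inner ℂ u (Z g) := by rw [hv, adjoint_inner_left]
      _ = inner ℂ u (Z v + (lam : ℂ) • u) := by rw [hTu]
      _ = inner ℂ u (Z v) + (lam : ℂ) * inner ℂ u u := by
          rw [inner_add_right, inner_smul_right]
      _ = inner ℂ v v + (lam : ℂ) * inner ℂ u u := by rw [← adjoint_inner_left, ← hv]
      _ = ((‖v‖ ^ 2 + lam * ‖u‖ ^ 2 : ℝ) : ℂ) := by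
          rw [inner_self_eq_norm_sq_to_K, inner_self_eq_norm_sq_to_K]
          norm_num
  have hre : Complex.re (inner ℂ v g : ℂ) = ‖v‖ ^ 2 + lam * ‖u‖ ^ 2 := by
    rw [hvg, Complex.ofReal_re]
  have hcs : Complex.re (inner ℂ v g : ℂ) ≤ ‖v‖ * ‖g‖ := re_inner_le_norm (𝕜 := ℂ) v g
  have hPff : (inner ℂ (P f) f : ℂ) = inner ℂ g g := by
    have hPP : P (P f) = P f := by
      have := congrArg (fun A : H →L[ℂ] H => A f) hPidem
      simpa [ContinuousLinearMap.mul_apply] using this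
    calc (inner ℂ (P f) f : ℂ) = inner ℂ (P (P f)) f := by rw [hPP]
      _ = inner ℂ (adjoint P (P f)) f := by rw [hPadj]
      _ = inner ℂ (P f) (P f) := adjoint_inner_left P _ _
      _ = inner ℂ g g := by rw [← hg]
  have hmain : (inner ℂ ((adjoint Z) (B (Z f))) f : ℂ) = inner ℂ v g := by
    calc (inner ℂ ((adjoint Z) (B (Z f))) f : ℂ)
        = inner ℂ (B (Z f)) (Z f) := adjoint_inner_left Z _ _
      _ = inner ℂ u (Z g) := by rw [hZf, ← hu]
      _ = inner ℂ v g := by rw [hv, adjoint_inner_left]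
  have hgre : Complex.re (inner ℂ (P f) f : ℂ) = ‖g‖ ^ 2 := by
    rw [hPff, inner_self_eq_norm_sq_to_K]
    norm_cast
  simp only [reApplyInnerSelf_apply, ContinuousLinearMap.sub_apply,
    ContinuousLinearMap.comp_apply, inner_sub_left, RCLike.re_to_complex, Complex.sub_re, hmain, hgre]
  nlinarith [sq_nonneg (‖v‖ - ‖g‖), mul_nonneg hlam.le (sq_nonneg ‖u‖),
    norm_nonneg v, norm_nonneg g]
end

section
/- Let A, B be bounded self-adjoint positive operators on a separable Hilbert space and λ > 0. If β := sup of the spectrum of (B + λI)^{-1/2}(B − A)(B + λI)^{-1/2} satisfies β < 1, then ‖(A + λI)^{-1/2}(B + λI)^{1/2}‖ ≤ (1 − β)^{-1/2}. -/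
open ContinuousLinearMap

/-- If `β = λ_max((B+λI)^{-1/2}(B−A)(B+λI)^{-1/2}) < 1`, then
`‖(A+λI)^{-1/2}(B+λI)^{1/2}‖ ≤ (1−β)^{-1/2}`. -/
theorem norm_invSqrt_mul_sqrt_le
    {H : Type*} [NormedAddCommGroup H] [InnerProductSpace ℂ H] [CompleteSpace H]
    (A B : H →L[ℂ] H) (hA : A.IsPositive) (hB : B.IsPositive)
    (lam : ℝ) (hlam : 0 < lam)
    -- `Sa = (A + λI)^{-1/2}`: positive, and `Sa²` inverts `A + λI`
    (Sa : H →L[ℂ] H) (hSa : Sa.IsPositive)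
    (hSal : (Sa * Sa) * (A + (lam : ℂ) • 1) = 1)
    (hSar : (A + (lam : ℂ) • 1) * (Sa * Sa) = 1)
    -- `Sb = (B + λI)^{1/2}`: positive square root
    (Sb : H →L[ℂ] H) (hSb : Sb.IsPositive)
    (hSb2 : Sb * Sb = B + (lam : ℂ) • 1)
    -- `T = (B + λI)^{-1/2}`: positive, and `T²` inverts `B + λI`
    (T : H →L[ℂ] H) (hT : T.IsPositive)
    (hTl : (T * T) * (B + (lam : ℂ) • 1) = 1)
    (hTr : (B + (lam : ℂ) • 1) * (T * T) = 1)
    (beta : ℝ) (hbeta : beta = sSup (spectrum ℝ (T * (B - A) * T)))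
    (hbeta1 : beta < 1) :
    ‖Sa * Sb‖ ≤ (Real.sqrt (1 - beta))⁻¹ := by
  set Al : H →L[ℂ] H := A + (lam : ℂ) • 1 with hAldef
  set Bl : H →L[ℂ] H := B + (lam : ℂ) • 1 with hBldef
  set C : H →L[ℂ] H := T * (B - A) * T with hCdef
  -- self-adjointness facts
  have hAsa : IsSelfAdjoint A := hA.isSelfAdjoint
  have hBsa : IsSelfAdjoint B := hB.isSelfAdjoint
  have hTsa : IsSelfAdjoint T := hT.isSelfAdjoint
  have hSasa : IsSelfAdjoint Sa := hSa.isSelfAdjoint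
  have hSbsa : IsSelfAdjoint Sb := hSb.isSelfAdjoint
  have hBAsa : IsSelfAdjoint (B - A) := hBsa.sub hAsa
  have hCsa : IsSelfAdjoint C := by
    simpa [hCdef, hTsa.star_eq] using hBAsa.conjugate T
  -- commutation: `T` commutes with `Bl`, `Sa` commutes with `Al`
  have hTBl : T * Bl = Bl * T := by
    calc T * Bl = (Bl * (T * T)) * (T * Bl) := by rw [hTr, one_mul]
      _ = (Bl * T) * ((T * T) * Bl) := by noncomm_ring
      _ = Bl * T := by rw [hTl, mul_one]
  have hSaAl : Sa * Al = Al * Sa := by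
    calc Sa * Al = (Al * (Sa * Sa)) * (Sa * Al) := by rw [hSar, one_mul]
      _ = (Al * Sa) * ((Sa * Sa) * Al) := by noncomm_ring
      _ = Al * Sa := by rw [hSal, mul_one]
  have key1 : Sa * Al * Sa = 1 := by
    rw [hSaAl, mul_assoc, hSar]
  have hTBT : T * (Bl * T) = 1 := by
    rw [← mul_assoc, hTBl, mul_assoc, hTr]
  have hEE : (Bl * T) * (Bl * T) = Bl := by
    calc (Bl * T) * (Bl * T) = Bl * ((T * Bl) * T) := by noncomm_ring
      _ = Bl * ((Bl * T) * T) := by rw [hTBl]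
      _ = Bl * (Bl * (T * T)) := by noncomm_ring
      _ = Bl := by rw [hTr, mul_one]
  have hEsa : IsSelfAdjoint (Bl * T) := by
    have hBlsa : IsSelfAdjoint Bl := by
      refine hBsa.add ?_
      have : star ((lam : ℂ) • (1 : H →L[ℂ] H)) = (lam : ℂ) • 1 := by
        simp [star_smul, Complex.star_def, Complex.conj_ofReal]
      exact this
    calc star (Bl * T) = star T * star Bl := star_mul _ _
      _ = T * Bl := by rw [hTsa.star_eq, hBlsa.star_eq]
      _ = Bl * T := hTBl
  -- the spectral bound: `β • 1 - C ≥ 0`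
  have hbd : BddAbove (spectrum ℝ C) := (spectrum.isCompact (𝕜 := ℝ) C).bddAbove
  have hDnn : (0 : H →L[ℂ] H) ≤ algebraMap ℝ (H →L[ℂ] H) beta - C := by
    have hDsa : IsSelfAdjoint (algebraMap ℝ (H →L[ℂ] H) beta - C) :=
      ((IsSelfAdjoint.all beta).algebraMap _).sub hCsa
    rw [StarOrderedRing.nonneg_iff_spectrum_nonneg (R := ℝ) _ hDsa]
    intro x hx
    rw [← spectrum.singleton_sub_eq] at hx
    obtain ⟨r, hr, s, hs, rfl⟩ := Set.mem_sub.mp hx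
    rw [Set.mem_singleton_iff] at hr
    have hsle : s ≤ sSup (spectrum ℝ C) := le_csSup hbd hs
    rw [hr, hbeta]
    rw [hCdef] at hsle
    linarith
  have hD : (algebraMap ℝ (H →L[ℂ] H) beta - C).IsPositive :=
    (ContinuousLinearMap.nonneg_iff_isPositive _).mp hDnn
  -- symmetric-operator inner product facts
  have hTsym := (isSelfAdjoint_iff_isSymmetric (A := T)).mp hTsa
  have hSasym := (isSelfAdjoint_iff_isSymmetric (A := Sa)).mp hSasa
  have hSbsym := (isSelfAdjoint_iff_isSymmetric (A := Sb)).mp hSbsa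
  have hEsym := (isSelfAdjoint_iff_isSymmetric (A := Bl * T)).mp hEsa
  -- main pointwise estimate
  have main : ∀ x : H, (1 - beta) * ‖(Sb * Sa) x‖ ^ 2 ≤ ‖x‖ ^ 2 := by
    intro x
    set u := Sa x with hu
    set v := (Bl * T) u with hv
    have hTv : T v = u := by
      have := congrArg (fun f : H →L[ℂ] H => f u) hTBT
      simpa [mul_apply, hv] using this
    set q1 : ℝ := RCLike.re (((inner ℂ (Bl u) (u) : ℂ))) with hq1
    set q2 : ℝ := RCLike.re (((inner ℂ ((B - A) u) (u) : ℂ))) with hq2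
    set q3 : ℝ := RCLike.re (((inner ℂ (Al u) (u) : ℂ))) with hq3
    -- ‖(Sb*Sa) x‖² = q1
    have f1 : ‖(Sb * Sa) x‖ ^ 2 = q1 := by
      have h1 : ((inner ℂ (Sb u) (Sb u) : ℂ)) = ((inner ℂ (Bl u) (u) : ℂ)) := by
        have hsym := hSbsym (Sb u) u
        simp only [ContinuousLinearMap.coe_coe] at hsym
        rw [← hsym]
        have : Sb (Sb u) = Bl u := by
          have := congrArg (fun f : H →L[ℂ] H => f u) hSb2
          simpa [mul_apply] using this
        rw [this]
      calc ‖(Sb * Sa) x‖ ^ 2 = ‖Sb u‖ ^ 2 := by rw [mul_apply_eq_comp]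
        _ = RCLike.re (((inner ℂ (Sb u) (Sb u) : ℂ))) := (inner_self_eq_norm_sq _).symm
        _ = q1 := by rw [h1]
    -- ‖v‖² = q1
    have f2 : ‖v‖ ^ 2 = q1 := by
      have h1 : ((inner ℂ (v) (v) : ℂ)) = ((inner ℂ (Bl u) (u) : ℂ)) := by
        have hsym := hEsym ((Bl * T) u) u
        simp only [ContinuousLinearMap.coe_coe] at hsym
        rw [hv, ← hsym]
        congr 1
        have := congrArg (fun f : H →L[ℂ] H => f u) hEE
        simpa [mul_apply] using this
      rw [← inner_self_eq_norm_sq (𝕜 := ℂ), h1]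
    -- re⟪C v, v⟫ = q2
    have f3 : RCLike.re (((inner ℂ (C v) (v) : ℂ))) = q2 := by
      have h1 : C v = T ((B - A) u) := by
        simp [hCdef, mul_apply, hTv]
      have hsym := hTsym ((B - A) u) v
      simp only [ContinuousLinearMap.coe_coe] at hsym
      rw [h1, hsym, hTv]
    -- positivity at v : q2 ≤ beta * q1
    have f4 : q2 ≤ beta * q1 := by
      have h0 : 0 ≤ (algebraMap ℝ (H →L[ℂ] H) beta - C).reApplyInnerSelf v := hD.2 v
      rw [reApplyInnerSelf_apply] at h0
      have halg : algebraMap ℝ (H →L[ℂ] H) beta = (beta : ℂ) • 1 := by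
        rw [IsScalarTower.algebraMap_apply ℝ ℂ (H →L[ℂ] H)]
        simp [Algebra.algebraMap_eq_smul_one]
      rw [halg] at h0
      have : RCLike.re (((inner ℂ ((((beta : ℂ) • 1 - C) : H →L[ℂ] H) v) (v) : ℂ)))
          = beta * ‖v‖ ^ 2 - RCLike.re (((inner ℂ (C v) (v) : ℂ))) := by
        rw [sub_apply, inner_sub_left, map_sub]
        congr 1
        rw [smul_apply, one_apply_eq_self, inner_smul_left, Complex.conj_ofReal]
        have h := inner_self_eq_norm_sq (𝕜 := ℂ) v
        rw [RCLike.re_to_complex] at h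
        simp only [RCLike.re_to_complex, Complex.re_ofReal_mul, h]
      rw [this, f2] at h0
      rw [← f3]
      · rw [f3]; linarith
    -- q1 = q3 + q2
    have f5 : q1 = q3 + q2 := by
      have : Bl u = Al u + (B - A) u := by
        have : Bl = Al + (B - A) := by rw [hAldef, hBldef]; abel
        rw [this, add_apply]
      rw [hq1, this, inner_add_left, map_add]
    -- q3 = ‖x‖²
    have f6 : q3 = ‖x‖ ^ 2 := by
      have h1 : ((inner ℂ (Al u) (u) : ℂ)) = ((inner ℂ (x) (x) : ℂ)) := by
        have hsym := hSasym (Al (Sa x)) x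
        simp only [ContinuousLinearMap.coe_coe] at hsym
        rw [hu, ← hsym]
        have : Sa (Al (Sa x)) = x := by
          have := congrArg (fun f : H →L[ℂ] H => f x) key1
          simpa [mul_apply] using this
        rw [this]
      rw [hq3, h1, inner_self_eq_norm_sq]
    rw [f1]
    nlinarith [f4, f5, f6]
  -- conclude
  have hb1 : 0 < 1 - beta := by linarith
  have hnorm : ‖Sa * Sb‖ = ‖Sb * Sa‖ := by
    rw [← norm_star (Sb * Sa), star_mul, hSasa.star_eq, hSbsa.star_eq]
  rw [hnorm]
  refine opNorm_le_bound _ (by positivity) fun x => ?_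
  have h := main x
  have hsq : (‖(Sb * Sa) x‖) ^ 2 ≤ ((Real.sqrt (1 - beta))⁻¹ * ‖x‖) ^ 2 := by
    rw [mul_pow, ← Real.sqrt_inv,
      Real.sq_sqrt (by positivity : (0 : ℝ) ≤ (1 - beta)⁻¹)]
    calc ‖(Sb * Sa) x‖ ^ 2
        = (1 - beta)⁻¹ * ((1 - beta) * ‖(Sb * Sa) x‖ ^ 2) := by
          field_simp
      _ ≤ (1 - beta)⁻¹ * ‖x‖ ^ 2 :=
          mul_le_mul_of_nonneg_left h (by positivity)
  calc ‖(Sb * Sa) x‖ = Real.sqrt (‖(Sb * Sa) x‖ ^ 2) := (Real.sqrt_sq (norm_nonneg _)).symm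
    _ ≤ Real.sqrt (((Real.sqrt (1 - beta))⁻¹ * ‖x‖) ^ 2) := Real.sqrt_le_sqrt hsq
    _ = (Real.sqrt (1 - beta))⁻¹ * ‖x‖ := Real.sqrt_sq (by positivity)
end

section
/- (Cordes inequality) Let A, B be positive semidefinite bounded linear operators on a separable Hilbert space and 0 ≤ s ≤ 1. Then ‖A^s B^s‖ ≤ ‖AB‖^s. -/
open ContinuousLinearMap

section CordesAux

open scoped NNReal ENNReal
open Filter

variable {H : Type*} [NormedAddCommGroup H] [InnerProductSpace ℂ H] [CompleteSpace H]

local notation "𝓐" => H →L[ℂ] H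

private lemma cordes_rpow_sa (a : 𝓐) (r : ℝ) : IsSelfAdjoint (CFC.rpow a r) :=
  IsSelfAdjoint.of_nonneg (CFC.rpow_nonneg (a := a) (y := r))

private lemma cordes_rpow_add (a : 𝓐) (ha : 0 ≤ a) {x y : ℝ} (hx : 0 ≤ x) (hy : 0 ≤ y)
    (hxy : x + y ≠ 0) : CFC.rpow a (x + y) = CFC.rpow a x * CFC.rpow a y := by
  unfold CFC.rpow
  rw [← cfc_mul (fun z : ℝ≥0 => z ^ x) (fun z : ℝ≥0 => z ^ y) a
      (NNReal.continuous_rpow_const hx).continuousOn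
      (NNReal.continuous_rpow_const hy).continuousOn]
  exact cfc_congr fun z _ => NNReal.rpow_add' hxy z

private lemma cordes_specRad_swap (u v : 𝓐) :
    spectralRadius ℂ (u * v) = spectralRadius ℂ (v * u) := by
  have key : ∀ w z : 𝓐, spectralRadius ℂ (w * z) ≤ spectralRadius ℂ (z * w) := by
    intro w z
    rw [spectralRadius, spectralRadius]
    refine iSup₂_le fun k hk => ?_
    rcases eq_or_ne k 0 with rfl | hk0
    · simp
    · have hmem : k ∈ spectrum ℂ (z * w) := by
        have : k ∈ spectrum ℂ (z * w) \ {0} := by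
          rw [← spectrum.nonzero_mul_comm]
          exact ⟨hk, by simpa using hk0⟩
        exact this.1
      exact le_iSup₂ (f := fun k (_ : k ∈ spectrum ℂ (z * w)) => (‖k‖₊ : ℝ≥0∞)) k hmem
  exact le_antisymm (key u v) (key v u)

private lemma cordes_key [Nontrivial H] (a b : 𝓐) (ha : 0 ≤ a) (hb : 0 ≤ b) {s t : ℝ}
    (hs : 0 ≤ s) (ht : 0 ≤ t) (hst : 0 < s + t) :
    ‖CFC.rpow a ((s + t) / 2) * CFC.rpow b ((s + t) / 2)‖ ^ 2
      ≤ ‖CFC.rpow a s * CFC.rpow b s‖ * ‖CFC.rpow a t * CFC.rpow b t‖ := by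
  set m : ℝ := (s + t) / 2 with hm
  have hm0 : 0 ≤ m := by positivity
  have hmm : m + m = s + t := by rw [hm]; ring
  have hstne : s + t ≠ 0 := hst.ne'
  have haa : CFC.rpow a m * CFC.rpow a m = CFC.rpow a (s + t) := by
    rw [← hmm]; exact (cordes_rpow_add a ha hm0 hm0 (by rw [hmm]; exact hstne)).symm
  have hbb : CFC.rpow b m * CFC.rpow b m = CFC.rpow b (s + t) := by
    rw [← hmm]; exact (cordes_rpow_add b hb hm0 hm0 (by rw [hmm]; exact hstne)).symm
  set X := CFC.rpow a m * CFC.rpow b m with hX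
  set Y := CFC.rpow b m * (CFC.rpow a (s + t) * CFC.rpow b m) with hY
  have hXX : star X * X = Y := by
    rw [hX, hY, star_mul, (cordes_rpow_sa a m).star_eq, (cordes_rpow_sa b m).star_eq, ← haa]
    simp only [mul_assoc]
  have hYsa : IsSelfAdjoint Y := by
    rw [← hXX]; exact IsSelfAdjoint.star_mul_self X
  -- spectral radius chain
  have e1 : (‖Y‖₊ : ℝ≥0∞) = spectralRadius ℂ Y := hYsa.spectralRadius_eq_nnnorm.symm
  have e2 : spectralRadius ℂ Y
      = spectralRadius ℂ (CFC.rpow a (s + t) * CFC.rpow b (s + t)) := by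
    rw [hY, cordes_specRad_swap (CFC.rpow b m) (CFC.rpow a (s + t) * CFC.rpow b m),
      mul_assoc, hbb]
  have e4 : CFC.rpow a (s + t) * CFC.rpow b (s + t)
      = CFC.rpow a s * (CFC.rpow a t * CFC.rpow b t * CFC.rpow b s) := by
    rw [cordes_rpow_add a ha hs ht hstne, show s + t = t + s from add_comm s t,
      cordes_rpow_add b hb ht hs (by rw [add_comm]; exact hstne)]
    simp only [mul_assoc]
  have e5 : spectralRadius ℂ (CFC.rpow a (s + t) * CFC.rpow b (s + t))
      = spectralRadius ℂ ((CFC.rpow a t * CFC.rpow b t) * (CFC.rpow b s * CFC.rpow a s)) := by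
    rw [e4, cordes_specRad_swap (CFC.rpow a s) (CFC.rpow a t * CFC.rpow b t * CFC.rpow b s)]
    simp only [mul_assoc]
  have e7 : spectralRadius ℂ ((CFC.rpow a t * CFC.rpow b t) * (CFC.rpow b s * CFC.rpow a s))
      ≤ (‖(CFC.rpow a t * CFC.rpow b t) * (CFC.rpow b s * CFC.rpow a s)‖₊ : ℝ≥0∞) :=
    spectrum.spectralRadius_le_nnnorm _
  have hnn : ‖Y‖₊ ≤ ‖CFC.rpow a t * CFC.rpow b t‖₊ * ‖CFC.rpow b s * CFC.rpow a s‖₊ := by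
    have := (e1.trans (e2.trans e5)).le.trans e7
    have h2 : (‖Y‖₊ : ℝ≥0∞)
        ≤ (↑(‖CFC.rpow a t * CFC.rpow b t‖₊ * ‖CFC.rpow b s * CFC.rpow a s‖₊) : ℝ≥0∞) := by
      refine this.trans ?_
      exact_mod_cast ENNReal.coe_le_coe.mpr (nnnorm_mul_le _ _)
    exact_mod_cast h2
  have hswap : ‖CFC.rpow b s * CFC.rpow a s‖₊ = ‖CFC.rpow a s * CFC.rpow b s‖₊ := by
    rw [← nnnorm_star (CFC.rpow a s * CFC.rpow b s), star_mul,
      (cordes_rpow_sa a s).star_eq, (cordes_rpow_sa b s).star_eq]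
  have hfinal : ‖X‖₊ ^ 2 ≤ ‖CFC.rpow a s * CFC.rpow b s‖₊ * ‖CFC.rpow a t * CFC.rpow b t‖₊ := by
    rw [sq, ← CStarRing.nnnorm_star_mul_self (x := X), hXX]
    rw [hswap] at hnn
    rw [mul_comm]
    exact hnn
  calc ‖X‖ ^ 2 = ((‖X‖₊ ^ 2 : ℝ≥0) : ℝ) := by push_cast; rfl
    _ ≤ ((‖CFC.rpow a s * CFC.rpow b s‖₊ * ‖CFC.rpow a t * CFC.rpow b t‖₊ : ℝ≥0) : ℝ) := by
        exact_mod_cast hfinal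
    _ = ‖CFC.rpow a s * CFC.rpow b s‖ * ‖CFC.rpow a t * CFC.rpow b t‖ := by push_cast; rfl

private lemma cordes_dyadic [Nontrivial H] (a b : 𝓐) (ha : 0 ≤ a) (hb : 0 ≤ b) :
    ∀ n k : ℕ, k ≤ 2 ^ n →
      ‖CFC.rpow a ((k : ℝ) / 2 ^ n) * CFC.rpow b ((k : ℝ) / 2 ^ n)‖
        ≤ ‖a * b‖ ^ ((k : ℝ) / 2 ^ n) := by
  intro n
  induction n with
  | zero =>
    intro k hk
    interval_cases k
    · norm_num
      rw [show ((0 : ℝ) : ℝ) = (0 : ℝ) from rfl]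
      rw [CFC.rpow_zero a ha, CFC.rpow_zero b hb]
      simp
    · norm_num
      rw [CFC.rpow_one a ha, CFC.rpow_one b hb]
  | succ n ih =>
    intro k hk
    rcases Nat.even_or_odd k with ⟨j, hj⟩ | ⟨j, hj⟩
    · subst hj
      have hj2 : j ≤ 2 ^ n := by
        have : 2 ^ (n + 1) = 2 * 2 ^ n := by ring
        omega
      have hcast : ((j + j : ℕ) : ℝ) / 2 ^ (n + 1) = (j : ℝ) / 2 ^ n := by
        push_cast
        field_simp
        ring
      rw [hcast]
      exact ih j hj2
    · subst hj
      have hj1 : j + 1 ≤ 2 ^ n := by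
        have : 2 ^ (n + 1) = 2 * 2 ^ n := by ring
        omega
      have hj0 : j ≤ 2 ^ n := Nat.le_of_succ_le hj1
      set s : ℝ := (j : ℝ) / 2 ^ n with hsdef
      set t : ℝ := ((j : ℕ) + 1 : ℝ) / 2 ^ n with htdef
      have hs : 0 ≤ s := by positivity
      have ht : 0 ≤ t := by positivity
      have hst : 0 < s + t := by
        have : 0 < t := by positivity
        linarith
      have hm : ((2 * j + 1 : ℕ) : ℝ) / 2 ^ (n + 1) = (s + t) / 2 := by
        rw [hsdef, htdef]
        push_cast
        field_simp
        ring
      rw [hm]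
      have hkey := cordes_key a b ha hb hs ht hst
      have hs' := ih j hj0
      have ht' : ‖CFC.rpow a t * CFC.rpow b t‖ ≤ ‖a * b‖ ^ t := by
        have := ih (j + 1) hj1
        rwa [show (((j + 1 : ℕ) : ℝ)) = ((j : ℕ) + 1 : ℝ) by push_cast; ring] at this
      have hc : (0 : ℝ) ≤ ‖a * b‖ := norm_nonneg _
      have hrhs : ‖a * b‖ ^ s * ‖a * b‖ ^ t = (‖a * b‖ ^ ((s + t) / 2)) ^ 2 := by
        rw [← Real.rpow_add' hc hst.ne', ← Real.rpow_natCast (‖a * b‖ ^ ((s + t) / 2)) 2,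
          ← Real.rpow_mul hc]
        norm_num
      refine le_of_pow_le_pow_left₀ two_ne_zero (by positivity) ?_
      calc ‖CFC.rpow a ((s + t) / 2) * CFC.rpow b ((s + t) / 2)‖ ^ 2
          ≤ ‖CFC.rpow a s * CFC.rpow b s‖ * ‖CFC.rpow a t * CFC.rpow b t‖ := hkey
        _ ≤ ‖a * b‖ ^ s * ‖a * b‖ ^ t := by
            apply mul_le_mul hs' ht' (norm_nonneg _) (by positivity)
        _ = (‖a * b‖ ^ ((s + t) / 2)) ^ 2 := hrhs

private lemma cordes_rpow_tendsto [Nontrivial H] (a : 𝓐) (ha : 0 ≤ a) {s : ℝ} (hs : 0 < s)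
    {q : ℕ → ℝ} (hq0 : ∀ n, 0 ≤ q n) (hq : Tendsto q atTop (nhds s)) :
    Tendsto (fun n => CFC.rpow a (q n)) atTop (nhds (CFC.rpow a s)) := by
  have hsa : IsSelfAdjoint a := IsSelfAdjoint.of_nonneg ha
  set M : ℝ := ‖a‖ with hM
  -- real representation of rpow
  have hrepr : ∀ r : ℝ, 0 ≤ r → CFC.rpow a r
      = cfc (fun x : ℝ => ((x.toNNReal ^ r : ℝ≥0) : ℝ)) a := by
    intro r hr
    unfold CFC.rpow
    exact cfc_nnreal_eq_real (fun z : ℝ≥0 => z ^ r) a ha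
  have hcont : ∀ r : ℝ, 0 ≤ r → Continuous (fun x : ℝ => ((x.toNNReal ^ r : ℝ≥0) : ℝ)) := by
    intro r hr
    exact NNReal.continuous_coe.comp ((NNReal.continuous_rpow_const hr).comp
      continuous_real_toNNReal)
  rw [Metric.tendsto_atTop]
  intro ε hε
  -- uniform continuity setup
  set K : Set (ℝ × ℝ) := Set.Icc (0 : ℝ) M ×ˢ Set.Icc (s / 2) (s + 1) with hK
  have hKcomp : IsCompact K := (isCompact_Icc).prod isCompact_Icc
  have hFcont : ContinuousOn (fun p : ℝ × ℝ => (p.1.toNNReal : ℝ) ^ p.2) K := by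
    intro p hp
    have hp2 : 0 < p.2 := lt_of_lt_of_le (by linarith : (0 : ℝ) < s / 2) hp.2.1
    have h2 : Continuous (fun p : ℝ × ℝ => (((p.1.toNNReal : ℝ)), p.2)) :=
      ((NNReal.continuous_coe.comp continuous_real_toNNReal).comp continuous_fst).prodMk
        continuous_snd
    have h1 : ContinuousAt (fun p : ℝ × ℝ => p.1 ^ p.2)
        ((fun p : ℝ × ℝ => (((p.1.toNNReal : ℝ)), p.2)) p) :=
      Real.continuousAt_rpow _ (Or.inr hp2)
    exact (ContinuousAt.comp (f := fun p : ℝ × ℝ => (((p.1.toNNReal : ℝ)), p.2)) (x := p)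
      h1 h2.continuousAt).continuousWithinAt
  have hUC := (hKcomp.uniformContinuousOn_of_continuous hFcont)
  obtain ⟨δ, hδ, hδ'⟩ := Metric.uniformContinuousOn_iff.mp hUC (ε / 2) (by linarith)
  set δ' : ℝ := min δ (min (s / 2) 1) with hδ'def
  have hδ'0 : 0 < δ' := by
    apply lt_min hδ
    apply lt_min (by linarith) one_pos
  obtain ⟨N, hN⟩ := (Metric.tendsto_atTop.mp hq) δ' hδ'0
  refine ⟨N, fun n hn => ?_⟩
  have hqn := hN n hn
  rw [Real.dist_eq] at hqn
  have hqn1 : |q n - s| < δ := lt_of_lt_of_le hqn (min_le_left _ _)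
  have hqn2 : |q n - s| < s / 2 :=
    lt_of_lt_of_le hqn ((min_le_right _ _).trans (min_le_left _ _))
  have hqn3 : |q n - s| < 1 :=
    lt_of_lt_of_le hqn ((min_le_right _ _).trans (min_le_right _ _))
  have hqmem : q n ∈ Set.Icc (s / 2) (s + 1) := by
    rw [abs_lt] at hqn2 hqn3
    constructor <;> linarith [hqn2.1, hqn3.2]
  have hsmem : s ∈ Set.Icc (s / 2) (s + 1) := by
    constructor <;> linarith
  rw [dist_eq_norm, hrepr (q n) (hq0 n), hrepr s hs.le,
    ← cfc_sub _ _ a ((hcont _ (hq0 n)).continuousOn) ((hcont _ hs.le).continuousOn)]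
  have hbound : ∀ x ∈ spectrum ℝ a,
      ‖((x.toNNReal ^ (q n) : ℝ≥0) : ℝ) - ((x.toNNReal ^ s : ℝ≥0) : ℝ)‖ ≤ ε / 2 := by
    intro x hx
    have hxM : (x.toNNReal : ℝ) ≤ M := by
      have h1 : ‖x‖ ≤ ‖a‖ := spectrum.norm_le_norm_of_mem hx
      rw [Real.norm_eq_abs] at h1
      rw [Real.coe_toNNReal']
      exact max_le ((le_abs_self x).trans h1) (norm_nonneg a)
    have hmem1 : ((x.toNNReal : ℝ), q n) ∈ K :=
      ⟨⟨NNReal.coe_nonneg _, hxM⟩, hqmem⟩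
    have hmem2 : ((x.toNNReal : ℝ), s) ∈ K :=
      ⟨⟨NNReal.coe_nonneg _, hxM⟩, hsmem⟩
    have hdist : dist (((x.toNNReal : ℝ), q n)) (((x.toNNReal : ℝ), s)) < δ := by
      rw [Prod.dist_eq]
      simp only [dist_self]
      rw [max_eq_right dist_nonneg, Real.dist_eq]
      exact hqn1
    have := hδ' _ hmem1 _ hmem2 hdist
    rw [Real.dist_eq] at this
    have hcoe : ∀ r : ℝ, ((x.toNNReal ^ r : ℝ≥0) : ℝ) = (x.toNNReal : ℝ) ^ r := by
      intro r; exact NNReal.coe_rpow _ _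
    rw [Real.norm_eq_abs, hcoe, hcoe]
    exact le_of_lt (by simpa using this)
  have := norm_cfc_le (f := fun x : ℝ =>
      ((x.toNNReal ^ (q n) : ℝ≥0) : ℝ) - ((x.toNNReal ^ s : ℝ≥0) : ℝ)) (a := a)
      (by linarith : (0:ℝ) ≤ ε / 2) hbound
  calc ‖cfc (fun x : ℝ =>
      ((x.toNNReal ^ (q n) : ℝ≥0) : ℝ) - ((x.toNNReal ^ s : ℝ≥0) : ℝ)) a‖ ≤ ε / 2 := this
    _ < ε := by linarith

private lemma cordes_main [Nontrivial H] (a b : 𝓐) (ha : 0 ≤ a) (hb : 0 ≤ b) (s : ℝ)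
    (hs0 : 0 ≤ s) (hs1 : s ≤ 1) :
    ‖CFC.rpow a s * CFC.rpow b s‖ ≤ ‖a * b‖ ^ s := by
  rcases eq_or_lt_of_le hs0 with rfl | hs
  · rw [show CFC.rpow a (0 : ℝ) = 1 from CFC.rpow_zero a ha,
      show CFC.rpow b (0 : ℝ) = 1 from CFC.rpow_zero b hb, Real.rpow_zero]
    simp
  · -- dyadic approximation
    set q : ℕ → ℝ := fun n => (⌊s * 2 ^ n⌋₊ : ℝ) / 2 ^ n with hqdef
    have hq0 : ∀ n, 0 ≤ q n := fun n => by positivity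
    have hqle : ∀ n, q n ≤ s := by
      intro n
      rw [hqdef, div_le_iff₀ (by positivity)]
      exact Nat.floor_le (by positivity)
    have hqge : ∀ n, s - ((2 : ℝ) ^ n)⁻¹ ≤ q n := by
      intro n
      have h2 : (0 : ℝ) < 2 ^ n := by positivity
      have h := Nat.sub_one_lt_floor (s * 2 ^ n)
      rw [hqdef, le_div_iff₀ h2]
      have heq : (s - ((2 : ℝ) ^ n)⁻¹) * 2 ^ n = s * 2 ^ n - 1 := by field_simp
      rw [heq]
      exact h.le
    have hq : Tendsto q atTop (nhds s) := by
      have h1 : Tendsto (fun n : ℕ => s - ((2 : ℝ) ^ n)⁻¹) atTop (nhds s) := by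
        have : Tendsto (fun n : ℕ => ((2 : ℝ) ^ n)⁻¹) atTop (nhds 0) := by
          simp only [← inv_pow]
          exact tendsto_pow_atTop_nhds_zero_of_lt_one (by norm_num) (by norm_num)
        simpa using tendsto_const_nhds.sub this
      exact tendsto_of_tendsto_of_tendsto_of_le_of_le h1 tendsto_const_nhds hqge hqle
    have hdy : ∀ n, ‖CFC.rpow a (q n) * CFC.rpow b (q n)‖ ≤ ‖a * b‖ ^ (q n) := by
      intro n
      have hk : ⌊s * 2 ^ n⌋₊ ≤ 2 ^ n := by
        have : s * 2 ^ n ≤ 2 ^ n := by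
          nlinarith [pow_pos (by norm_num : (0:ℝ) < 2) n]
        calc ⌊s * 2 ^ n⌋₊ ≤ ⌊(2 : ℝ) ^ n⌋₊ := Nat.floor_mono this
          _ = 2 ^ n := by
              rw [show ((2 : ℝ) ^ n) = ((2 ^ n : ℕ) : ℝ) by push_cast; ring, Nat.floor_natCast]
      have := cordes_dyadic a b ha hb n ⌊s * 2 ^ n⌋₊ hk
      rw [hqdef]
      convert this using 3 <;> push_cast <;> ring
    have hL : Tendsto (fun n => ‖CFC.rpow a (q n) * CFC.rpow b (q n)‖) atTop
        (nhds ‖CFC.rpow a s * CFC.rpow b s‖) :=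
      ((cordes_rpow_tendsto a ha hs hq0 hq).mul (cordes_rpow_tendsto b hb hs hq0 hq)).norm
    have hR : Tendsto (fun n => ‖a * b‖ ^ (q n)) atTop (nhds (‖a * b‖ ^ s)) := by
      have hca : ContinuousAt (fun y : ℝ => ‖a * b‖ ^ y) s := by
        rcases eq_or_ne ‖a * b‖ 0 with hc | hc
        · exact Real.continuousAt_const_rpow' hs.ne'
        · exact Real.continuousAt_const_rpow hc
      exact hca.tendsto.comp hq
    exact le_of_tendsto_of_tendsto' hL hR hdy

end CordesAux

/-- Cordes inequality: `‖A^s B^s‖ ≤ ‖AB‖^s` for positive semidefinite bounded operators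
`A, B` and `0 ≤ s ≤ 1`. -/
theorem cordes_inequality
    {H : Type*} [NormedAddCommGroup H] [InnerProductSpace ℂ H] [CompleteSpace H]
    (A B : H →L[ℂ] H) (hA : A.IsPositive) (hB : B.IsPositive)
    (s : ℝ) (hs0 : 0 ≤ s) (hs1 : s ≤ 1) :
    ‖CFC.rpow A s * CFC.rpow B s‖ ≤ ‖A * B‖ ^ s := by
  obtain h | h := subsingleton_or_nontrivial H
  · have h0 : (CFC.rpow A s * CFC.rpow B s) = 0 := Subsingleton.elim _ _
    rw [h0, norm_zero]
    exact Real.rpow_nonneg (norm_nonneg _) s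
  · exact cordes_main A B ((nonneg_iff_isPositive A).mpr hA) ((nonneg_iff_isPositive B).mpr hB)
      s hs0 hs1
end
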